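/- Optimal dual potentials of the balanced entropic OT problem are unique up to constant shift: if (f, g) and (f', g') are both maximizers of E(f,g) = ⟨f,a⟩ + ⟨g,b⟩ − ε⟨e^{f/ε}, K e^{g/ε}⟩ with a, b strictly positive probability vectors and K entrywise positive, then there exists s ∈ ℝ with f' = f − s·𝟙 and g' = g + s·𝟙. -/

import Mathlib

open Finset Real

/-- Entropic dual objective E(f,g) = ⟨f,a⟩ + ⟨g,b⟩ − ε ⟨e^{f/ε}, K e^{g/ε}⟩. -/
noncomputable def dualObj {n m : ℕ} (ε : ℝ) (a : Fin n → ℝ) (b : Fin m → ℝ)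
    (K : Matrix (Fin n) (Fin m) ℝ) (f : Fin n → ℝ) (g : Fin m → ℝ) : ℝ :=
  (∑ i, f i * a i) + (∑ j, g j * b j) -
    ε * ∑ i, ∑ j, Real.exp (f i / ε) * K i j * Real.exp (g j / ε)

lemma sum_update_aux {n : ℕ} (f : Fin n → ℝ) (i : Fin n) (t : ℝ) (φ : Fin n → ℝ → ℝ) :
    ∑ i', φ i' (Function.update f i t i') = (∑ i', φ i' (f i')) + φ i t - φ i (f i) := by
  rw [← Finset.add_sum_erase _ (fun i' => φ i' (Function.update f i t i')) (Finset.mem_univ i),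
      ← Finset.add_sum_erase _ (fun i' => φ i' (f i')) (Finset.mem_univ i)]
  have h : ∑ i' ∈ Finset.univ.erase i, φ i' (Function.update f i t i')
      = ∑ i' ∈ Finset.univ.erase i, φ i' (f i') := by
    refine Finset.sum_congr rfl fun i' hi' => ?_
    rw [Function.update_of_ne (Finset.ne_of_mem_erase hi')]
  rw [h, Function.update_self]
  ring

lemma maxAux (ε A c t0 : ℝ) (hε : 0 < ε)
    (h : ∀ t, A * t - ε * (c * Real.exp (t / ε)) ≤ A * t0 - ε * (c * Real.exp (t0 / ε))) :
    c * Real.exp (t0 / ε) = A := by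
  have h1 : HasDerivAt (fun t : ℝ => t / ε) (1 / ε) t0 := (hasDerivAt_id t0).div_const ε
  have h2 : HasDerivAt (fun t => Real.exp (t / ε)) (Real.exp (t0 / ε) * (1 / ε)) t0 :=
    (Real.hasDerivAt_exp _).comp t0 h1
  have hd : HasDerivAt (fun t => A * t - ε * (c * Real.exp (t / ε)))
      (A - c * Real.exp (t0 / ε)) t0 := by
    have := ((hasDerivAt_id t0).const_mul A).sub ((h2.const_mul c).const_mul ε)
    refine this.congr_deriv ?_
    have hε0 : ε ≠ 0 := hε.ne'
    rw [mul_one, mul_one_div, ← mul_div_assoc, ← mul_div_assoc, mul_div_cancel_left₀ _ hε0]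
  have hmax : IsLocalMax (fun t => A * t - ε * (c * Real.exp (t / ε))) t0 :=
    Filter.Eventually.of_forall h
  have := hmax.hasDerivAt_eq_zero hd
  linarith

lemma statF {n m : ℕ} (ε : ℝ) (hε : 0 < ε) (a : Fin n → ℝ) (b : Fin m → ℝ)
    (K : Matrix (Fin n) (Fin m) ℝ) (f : Fin n → ℝ) (g : Fin m → ℝ)
    (hfg : ∀ (u : Fin n → ℝ) (v : Fin m → ℝ), dualObj ε a b K u v ≤ dualObj ε a b K f g) :
    ∀ i, Real.exp (f i / ε) * (∑ j, K i j * Real.exp (g j / ε)) = a i := by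
  intro i
  set C := ∑ j, K i j * Real.exp (g j / ε) with hC
  have h2 : ∀ x : ℝ, ∑ j, Real.exp (x / ε) * K i j * Real.exp (g j / ε) = Real.exp (x / ε) * C := by
    intro x; rw [hC, Finset.mul_sum]; exact Finset.sum_congr rfl fun j _ => by ring
  have key : ∀ t, a i * t - ε * (C * Real.exp (t / ε)) ≤ a i * f i - ε * (C * Real.exp (f i / ε)) := by
    intro t
    have h := hfg (Function.update f i t) g
    have e1 : dualObj ε a b K (Function.update f i t) g
        = dualObj ε a b K f g + (a i * t - ε * (C * Real.exp (t / ε)))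
          - (a i * f i - ε * (C * Real.exp (f i / ε))) := by
      unfold dualObj
      rw [sum_update_aux f i t (fun i' x => x * a i'),
          sum_update_aux f i t (fun i' x => ∑ j, Real.exp (x / ε) * K i' j * Real.exp (g j / ε))]
      simp only [h2]
      ring
    rw [e1] at h
    linarith
  have := maxAux ε (a i) C (f i) hε key
  linarith

lemma statG {n m : ℕ} (ε : ℝ) (hε : 0 < ε) (a : Fin n → ℝ) (b : Fin m → ℝ)
    (K : Matrix (Fin n) (Fin m) ℝ) (f : Fin n → ℝ) (g : Fin m → ℝ)
    (hfg : ∀ (u : Fin n → ℝ) (v : Fin m → ℝ), dualObj ε a b K u v ≤ dualObj ε a b K f g) :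
    ∀ j, Real.exp (g j / ε) * (∑ i, K i j * Real.exp (f i / ε)) = b j := by
  intro j
  set D := ∑ i, K i j * Real.exp (f i / ε) with hD
  have h2 : ∀ x : ℝ, ∑ i, Real.exp (f i / ε) * K i j * Real.exp (x / ε) = Real.exp (x / ε) * D := by
    intro x; rw [hD, Finset.mul_sum]; exact Finset.sum_congr rfl fun i _ => by ring
  have key : ∀ t, b j * t - ε * (D * Real.exp (t / ε)) ≤ b j * g j - ε * (D * Real.exp (g j / ε)) := by
    intro t
    have h := hfg f (Function.update g j t)
    have e1 : dualObj ε a b K f (Function.update g j t)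
        = dualObj ε a b K f g + (b j * t - ε * (D * Real.exp (t / ε)))
          - (b j * g j - ε * (D * Real.exp (g j / ε))) := by
      unfold dualObj
      rw [Finset.sum_comm (γ := Fin n) (s := Finset.univ) (t := Finset.univ),
          Finset.sum_comm (γ := Fin n) (s := Finset.univ) (t := Finset.univ)
            (f := fun i j' => Real.exp (f i / ε) * K i j' * Real.exp (g j' / ε)),
          sum_update_aux g j t (fun j' x => x * b j'),
          sum_update_aux g j t (fun j' x => ∑ i, Real.exp (f i / ε) * K i j' * Real.exp (x / ε))]
      simp only [h2]
      ring
    rw [e1] at h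
    linarith
  have := maxAux ε (b j) D (g j) hε key
  linarith

lemma exp_add_div (ε x y : ℝ) : Real.exp ((x + y) / ε) = Real.exp (x / ε) * Real.exp (y / ε) := by
  rw [add_div, Real.exp_add]

theorem stmt5 {n m : ℕ} (ε : ℝ) (hε : 0 < ε)
    (a : Fin n → ℝ) (b : Fin m → ℝ)
    (ha : ∀ i, 0 < a i) (hb : ∀ j, 0 < b j)
    (hasum : ∑ i, a i = 1) (hbsum : ∑ j, b j = 1)
    (K : Matrix (Fin n) (Fin m) ℝ) (hK : ∀ i j, 0 < K i j)
    (f f' : Fin n → ℝ) (g g' : Fin m → ℝ)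
    (hfg : ∀ (u : Fin n → ℝ) (v : Fin m → ℝ), dualObj ε a b K u v ≤ dualObj ε a b K f g)
    (hfg' : ∀ (u : Fin n → ℝ) (v : Fin m → ℝ), dualObj ε a b K u v ≤ dualObj ε a b K f' g') :
    ∃ s : ℝ, (∀ i, f' i = f i - s) ∧ (∀ j, g' j = g j + s) := by
  have hn : Nonempty (Fin n) := by
    rcases Nat.eq_zero_or_pos n with h | h
    · subst h; simp at hasum
    · exact Fin.pos_iff_nonempty.mp h
  have hm : Nonempty (Fin m) := by
    rcases Nat.eq_zero_or_pos m with h | h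
    · subst h; simp at hbsum
    · exact Fin.pos_iff_nonempty.mp h
  have hA := statF ε hε a b K f g hfg
  have hB := statG ε hε a b K f g hfg
  have hA' := statF ε hε a b K f' g' hfg'
  have hB' := statG ε hε a b K f' g' hfg'
  obtain ⟨i0, -, hi0⟩ := Finset.exists_max_image Finset.univ (fun i => f' i - f i)
    Finset.univ_nonempty
  set t := f' i0 - f i0 with ht
  have hfle : ∀ i, f' i ≤ f i + t := by
    intro i; have := hi0 i (Finset.mem_univ i); linarith
  have hconst : ∀ i, f' i = f i + t := by
    by_contra hcon
    push_neg at hcon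
    obtain ⟨i1, h1⟩ := hcon
    have h1' : f' i1 < f i1 + t := lt_of_le_of_ne (hfle i1) h1
    have hDpos : ∀ j, 0 < ∑ i, K i j * Real.exp (f i / ε) :=
      fun j => Finset.sum_pos (fun i _ => mul_pos (hK i j) (Real.exp_pos _))
        Finset.univ_nonempty
    have hDlt : ∀ j, (∑ i, K i j * Real.exp (f' i / ε))
        < Real.exp (t / ε) * ∑ i, K i j * Real.exp (f i / ε) := by
      intro j
      have hlt : ∑ i, K i j * Real.exp (f' i / ε)
          < ∑ i, K i j * (Real.exp (t / ε) * Real.exp (f i / ε)) := by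
        apply Finset.sum_lt_sum
        · intro i _
          have hle : Real.exp (f' i / ε) ≤ Real.exp ((f i + t) / ε) :=
            Real.exp_le_exp.mpr (div_le_div_of_nonneg_right (hfle i) hε.le)
          rw [exp_add_div] at hle
          nlinarith [hK i j, Real.exp_pos (t / ε), Real.exp_pos (f i / ε)]
        · refine ⟨i1, Finset.mem_univ i1, ?_⟩
          have hlt2 : Real.exp (f' i1 / ε) < Real.exp ((f i1 + t) / ε) :=
            Real.exp_lt_exp.mpr (div_lt_div_of_pos_right h1' hε)
          rw [exp_add_div] at hlt2
          nlinarith [hK i1 j, Real.exp_pos (t / ε), Real.exp_pos (f i1 / ε)]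
      calc (∑ i, K i j * Real.exp (f' i / ε))
          < ∑ i, K i j * (Real.exp (t / ε) * Real.exp (f i / ε)) := hlt
        _ = Real.exp (t / ε) * ∑ i, K i j * Real.exp (f i / ε) := by
            rw [Finset.mul_sum]; exact Finset.sum_congr rfl fun i _ => by ring
    have hglt : ∀ j, Real.exp (g j / ε) < Real.exp (t / ε) * Real.exp (g' j / ε) := by
      intro j
      have e1 := hB j
      have e2 := hB' j
      have hD'pos : 0 < ∑ i, K i j * Real.exp (f' i / ε) :=
        Finset.sum_pos (fun i _ => mul_pos (hK i j) (Real.exp_pos _)) Finset.univ_nonempty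
      have key : Real.exp (g j / ε) * (∑ i, K i j * Real.exp (f i / ε))
          < (Real.exp (t / ε) * Real.exp (g' j / ε)) * (∑ i, K i j * Real.exp (f i / ε)) := by
        rw [e1, ← e2]
        nlinarith [hDlt j, Real.exp_pos (g' j / ε), hD'pos]
      exact lt_of_mul_lt_mul_right (by linarith [key]) (le_of_lt (hDpos j))
    have hsumlt : ∑ j, K i0 j * Real.exp (g j / ε)
        < ∑ j, K i0 j * (Real.exp (t / ε) * Real.exp (g' j / ε)) :=
      Finset.sum_lt_sum_of_nonempty Finset.univ_nonempty
        (fun j _ => mul_lt_mul_of_pos_left (hglt j) (hK i0 j))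
    have hf'i0 : Real.exp (f' i0 / ε) = Real.exp (f i0 / ε) * Real.exp (t / ε) := by
      rw [← exp_add_div]; congr 1; rw [ht]; ring
    have e0 := hA i0
    have e0' := hA' i0
    have hrw : ∑ j, K i0 j * (Real.exp (t / ε) * Real.exp (g' j / ε))
        = Real.exp (t / ε) * ∑ j, K i0 j * Real.exp (g' j / ε) := by
      rw [Finset.mul_sum]; exact Finset.sum_congr rfl fun j _ => by ring
    have hfinal : a i0 < a i0 := by
      calc a i0 = Real.exp (f i0 / ε) * (∑ j, K i0 j * Real.exp (g j / ε)) := e0.symm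
        _ < Real.exp (f i0 / ε) * (∑ j, K i0 j * (Real.exp (t / ε) * Real.exp (g' j / ε))) :=
            mul_lt_mul_of_pos_left hsumlt (Real.exp_pos _)
        _ = Real.exp (f' i0 / ε) * (∑ j, K i0 j * Real.exp (g' j / ε)) := by
            rw [hrw, hf'i0]; ring
        _ = a i0 := e0'
    exact lt_irrefl _ hfinal
  refine ⟨-t, fun i => by rw [hconst i]; ring, fun j => ?_⟩
  have hD' : ∑ i, K i j * Real.exp (f' i / ε)
      = Real.exp (t / ε) * ∑ i, K i j * Real.exp (f i / ε) := by
    rw [Finset.mul_sum]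
    refine Finset.sum_congr rfl fun i _ => ?_
    rw [hconst i, exp_add_div]; ring
  have e1 := hB j
  have e2 := hB' j
  rw [hD'] at e2
  have hDpos : 0 < ∑ i, K i j * Real.exp (f i / ε) :=
    Finset.sum_pos (fun i _ => mul_pos (hK i j) (Real.exp_pos _)) Finset.univ_nonempty
  have hexp : Real.exp (g' j / ε) * Real.exp (t / ε) = Real.exp (g j / ε) := by
    have : (Real.exp (g' j / ε) * Real.exp (t / ε)) * (∑ i, K i j * Real.exp (f i / ε))
        = Real.exp (g j / ε) * (∑ i, K i j * Real.exp (f i / ε)) := by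
      rw [e1]; rw [← e2]; ring
    exact mul_right_cancel₀ (ne_of_gt hDpos) this
  rw [← Real.exp_add] at hexp
  have := Real.exp_eq_exp.mp hexp
  have h2 : g' j + t = g j := by
    field_simp at this
    linarith [this]
  linarith [h2]
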